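/- Let f, g ∈ L^1(ℝ) ∩ L^2(ℝ) (or ℱ^{-1}f, ℱ^{-1}g ∈ L^1([-B,B])) satisfy ℱ^{-1}f(η) · conj(ℱ^{-1}f(η-ξ)) = ℱ^{-1}g(η) · conj(ℱ^{-1}g(η-ξ)) for almost all (η,ξ) ∈ ℝ². Then there exists α ∈ ℝ such that f = e^{iα} g. -/

import Mathlib

open MeasureTheory Complex Real

open scoped FourierTransform RealInnerProductSpace

/-- The inverse Fourier transform `ℱ⁻¹f(η) = ∫ f(t) e^{2πitη} dt`. -/
noncomputable def invFourierT (f : ℝ → ℂ) (η : ℝ) : ℂ :=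
  ∫ t : ℝ, f t * Complex.exp (2*(π:ℂ)*Complex.I*(t:ℂ)*(η:ℂ))

/-- A smooth compactly supported complex-valued function, as a Schwartz map. -/
noncomputable def toSchwartz (g : ℝ → ℂ) (hg : ContDiff ℝ ((⊤:ℕ∞) : WithTop ℕ∞) g)
    (hsupp : HasCompactSupport g) : SchwartzMap ℝ ℂ where
  toFun := g
  smooth' := hg
  decay' := by
    intro k n
    have hcont : Continuous fun x : ℝ => ‖x‖ ^ k * ‖iteratedFDeriv ℝ n g x‖ :=
      ((continuous_norm.pow k).mul (hg.continuous_iteratedFDeriv (by exact_mod_cast le_top)).norm)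
    have hcs : HasCompactSupport fun x : ℝ => ‖x‖ ^ k * ‖iteratedFDeriv ℝ n g x‖ := by
      apply HasCompactSupport.mul_left
      exact (hsupp.iteratedFDeriv n).norm
    obtain ⟨C, hC⟩ := hcont.bounded_above_of_compact_support hcs
    refine ⟨C, fun x => ?_⟩
    have := hC x
    rwa [Real.norm_eq_abs, _root_.abs_of_nonneg (by positivity)] at this

lemma fourier_sub_mul {f g : ℝ → ℂ} (hf : Integrable f) (hg : Integrable g) (c : ℂ) (w : ℝ) :
    𝓕 (fun t => f t - c * g t) w = 𝓕 f w - c * 𝓕 g w := by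
  have h1 : Integrable (fun v : ℝ => 𝐞 (-⟪v, w⟫) • f v) :=
    (Real.fourierIntegral_convergent_iff w).2 hf
  have h2 : Integrable (fun v : ℝ => 𝐞 (-⟪v, w⟫) • g v) :=
    (Real.fourierIntegral_convergent_iff w).2 hg
  simp only [Real.fourier_eq]
  calc ∫ v : ℝ, 𝐞 (-⟪v, w⟫) • (f v - c * g v)
      = ∫ v : ℝ, (𝐞 (-⟪v, w⟫) • f v - c • (𝐞 (-⟪v, w⟫) • g v)) := by
        congr 1; ext v; simp only [Circle.smul_def, smul_eq_mul]; ring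
    _ = (∫ v : ℝ, 𝐞 (-⟪v, w⟫) • f v) - ∫ v : ℝ, c • (𝐞 (-⟪v, w⟫) • g v) :=
        integral_sub h1 (h2.smul c)
    _ = (∫ v : ℝ, 𝐞 (-⟪v, w⟫) • f v) - c * ∫ v : ℝ, 𝐞 (-⟪v, w⟫) • g v := by
        rw [integral_smul, smul_eq_mul]

/-- Injectivity of the Fourier transform on `L¹(ℝ)`. -/
lemma fourier_inj {h : ℝ → ℂ} (hh : Integrable h) (h0 : ∀ w, 𝓕 h w = 0) :
    h =ᵐ[volume] 0 := by
  apply ae_eq_zero_of_integral_contDiff_smul_eq_zero (hh.locallyIntegrable)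
  intro g hg hgsupp
  have hψc : ContDiff ℝ ((⊤:ℕ∞) : WithTop ℕ∞) fun x : ℝ => (g x : ℂ) :=
    Complex.ofRealCLM.contDiff.comp hg
  have hψsupp : HasCompactSupport fun x : ℝ => (g x : ℂ) :=
    hgsupp.comp_left (g := fun r : ℝ => (r : ℂ)) Complex.ofReal_zero
  set ψ : SchwartzMap ℝ ℂ := toSchwartz _ hψc hψsupp with hψ
  have hFψ : Integrable (𝓕 (fun x : ℝ => (g x : ℂ))) := by
    have := (SchwartzMap.fourierTransformCLM ℂ ψ).integrable (μ := volume)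
    exact this
  set φ : ℝ → ℂ := 𝓕⁻ (fun x : ℝ => (g x : ℂ)) with hφ
  have hφint : Integrable φ := by
    have : φ = fun w => 𝓕 (fun x : ℝ => (g x : ℂ)) (-w) := by
      funext w; exact Real.fourierInv_eq_fourier_neg _ w
    rw [this]
    exact hFψ.comp_neg
  have hFφ : 𝓕 φ = fun x : ℝ => (g x : ℂ) :=
    Continuous.fourier_fourierInv_eq hψc.continuous
      ((hψc.continuous).integrable_of_hasCompactSupport hψsupp) hFψ
  have flip_eq : (innerₗ ℝ).flip = innerₗ ℝ := by
    apply LinearMap.ext; intro x; apply LinearMap.ext; intro y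
    exact real_inner_comm x y
  have key := VectorFourier.integral_fourierIntegral_smul_eq_flip (μ := volume) (ν := volume)
    (L := innerₗ ℝ) (f := φ) (g := h) Real.continuous_fourierChar continuous_inner hφint hh
  rw [flip_eq] at key
  have key2 : ∫ ξ : ℝ, (𝓕 φ) ξ • h ξ = ∫ x : ℝ, φ x • (𝓕 h) x := key
  rw [hFφ] at key2
  simp only [h0, smul_zero, integral_zero] at key2
  rw [← key2]
  congr 1

lemma invFourierT_eq (f : ℝ → ℂ) : invFourierT f = 𝓕⁻ f := by
  ext η
  rw [invFourierT, Real.fourierInv_eq']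
  congr 1
  ext t
  rw [smul_eq_mul, mul_comm]
  congr 1
  simp only [RCLike.inner_apply, starRingEnd_apply, star_trivial]
  push_cast
  ring_nf

lemma continuous_invF {f : ℝ → ℂ} (hf : Integrable f) : Continuous (𝓕⁻ f) := by
  apply VectorFourier.fourierIntegral_continuous Real.continuous_fourierChar _ hf
  exact continuous_inner.neg

lemma inj' {h : ℝ → ℂ} (hh : Integrable h) (h0 : ∀ w, 𝓕⁻ h w = 0) :
    h =ᵐ[volume] 0 := by
  apply fourier_inj hh
  intro w
  have := Real.fourierInv_eq_fourier_neg h (-w)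
  rw [neg_neg] at this
  rw [← this, h0]

theorem stmt15 (f g : ℝ → ℂ)
    (hf1 : Integrable f (volume : Measure ℝ)) (hf2 : MemLp f 2 (volume : Measure ℝ))
    (hg1 : Integrable g (volume : Measure ℝ)) (hg2 : MemLp g 2 (volume : Measure ℝ))
    (hamb : ∀ᵐ q : ℝ × ℝ ∂(volume : Measure (ℝ × ℝ)),
      invFourierT f q.1 * (starRingEnd ℂ) (invFourierT f (q.1 - q.2))
        = invFourierT g q.1 * (starRingEnd ℂ) (invFourierT g (q.1 - q.2))) :
    ∃ α : ℝ, f =ᵐ[(volume : Measure ℝ)] fun t => Complex.exp (Complex.I * (α:ℂ)) * g t := by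
  set F := 𝓕⁻ f with hF
  set G := 𝓕⁻ g with hG
  rw [invFourierT_eq f, invFourierT_eq g, ← hF, ← hG] at hamb
  have hCF : Continuous F := continuous_invF hf1
  have hCG : Continuous G := continuous_invF hg1
  -- upgrade a.e. equality to everywhere equality
  have key : ∀ η ξ : ℝ, F η * (starRingEnd ℂ) (F (η - ξ)) = G η * (starRingEnd ℂ) (G (η - ξ)) := by
    have c1 : Continuous fun q : ℝ × ℝ => F q.1 * (starRingEnd ℂ) (F (q.1 - q.2)) :=
      (hCF.comp continuous_fst).mul
        (Complex.continuous_conj.comp (hCF.comp (continuous_fst.sub continuous_snd)))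
    have c2 : Continuous fun q : ℝ × ℝ => G q.1 * (starRingEnd ℂ) (G (q.1 - q.2)) :=
      (hCG.comp continuous_fst).mul
        (Complex.continuous_conj.comp (hCG.comp (continuous_fst.sub continuous_snd)))
    have := (Continuous.ae_eq_iff_eq (volume : Measure (ℝ × ℝ)) c1 c2).1 hamb
    intro η ξ
    exact congrFun this (η, ξ)
  by_cases hz : ∀ η : ℝ, F η = 0
  · -- both transforms vanish, so f and g vanish a.e.
    have hGz : ∀ η : ℝ, G η = 0 := by
      intro η
      have := key η 0
      rw [sub_zero, hz η, Complex.mul_conj, Complex.mul_conj] at this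
      have h0 : Complex.normSq (G η) = 0 := by
        have := this.symm
        simpa using congrArg Complex.re this
      exact Complex.normSq_eq_zero.1 h0
    have hfa : f =ᵐ[volume] 0 := inj' hf1 hz
    have hga : g =ᵐ[volume] 0 := inj' hg1 hGz
    refine ⟨0, ?_⟩
    filter_upwards [hfa, hga] with t h1 h2
    simp [h1, h2]
  · push_neg at hz
    obtain ⟨η₀, hη₀⟩ := hz
    have habs : Complex.normSq (F η₀) = Complex.normSq (G η₀) := by
      have := key η₀ 0
      rw [sub_zero, Complex.mul_conj, Complex.mul_conj] at this
      exact_mod_cast this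
    have hGη₀ : G η₀ ≠ 0 := by
      intro h
      rw [h, Complex.normSq_zero] at habs
      exact hη₀ (Complex.normSq_eq_zero.1 habs)
    set c : ℂ := (starRingEnd ℂ) (G η₀) / (starRingEnd ℂ) (F η₀) with hc
    have hFne : (starRingEnd ℂ) (F η₀) ≠ 0 := by
      simpa using hη₀
    have hcabs : ‖c‖ = 1 := by
      rw [hc, norm_div, Complex.norm_conj, Complex.norm_conj]
      have : ‖F η₀‖ = ‖G η₀‖ := by
        rw [Complex.normSq_eq_norm_sq, Complex.normSq_eq_norm_sq] at habs
        exact (pow_left_inj₀ (norm_nonneg _) (norm_nonneg _) two_ne_zero).1 habs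
      rw [← this, div_self (norm_ne_zero_iff.2 hη₀)]
    have hFc : ∀ η, F η = c * G η := by
      intro η
      have h1 := key η (η - η₀)
      rw [show η - (η - η₀) = η₀ by ring] at h1
      have h2 : F η * (starRingEnd ℂ) (F η₀) = (c * G η) * (starRingEnd ℂ) (F η₀) := by
        rw [hc, div_mul_eq_mul_div, div_mul_eq_mul_div, mul_div_assoc, div_self hFne, mul_one,
          mul_comm ((starRingEnd ℂ) (G η₀))]
        exact h1
      exact mul_right_cancel₀ hFne h2
    refine ⟨c.arg, ?_⟩
    have hcexp : c = Complex.exp (Complex.I * (c.arg : ℂ)) := by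
      have h := Complex.norm_mul_exp_arg_mul_I c
      rw [hcabs, Complex.ofReal_one, one_mul] at h
      rw [mul_comm I]
      exact h.symm
    have hz0 : ∀ w, 𝓕⁻ (fun t => f t - c * g t) w = 0 := by
      intro w
      have h1 : 𝓕⁻ (fun t => f t - c * g t) w = 𝓕 (fun t => f t - c * g t) (-w) :=
        Real.fourierInv_eq_fourier_neg _ w
      rw [h1, fourier_sub_mul hf1 hg1 c (-w)]
      have h2 : 𝓕 f (-w) = F w := (Real.fourierInv_eq_fourier_neg f w).symm
      have h3 : 𝓕 g (-w) = G w := (Real.fourierInv_eq_fourier_neg g w).symm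
      rw [h2, h3, hFc w, sub_self]
    have := inj' (hf1.sub (hg1.const_mul c)) hz0
    filter_upwards [this] with t ht
    have h4 : f t = c * g t := by simpa [sub_eq_zero] using ht
    rw [h4, ← hcexp]
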